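/- If A ∈ L¹_r(ℓ²(H)) and B ∈ B(ℓ²(H)), then B*A belongs to C(ℓ²(H)), i.e. the Fejér means σ_n(B*A) converge to B*A in the operator norm of B(ℓ²(H)). -/

import Mathlib

open Finset Filter

noncomputable section

variable {H : Type*} [NormedAddCommGroup H] [InnerProductSpace ℂ H]
  [CompleteSpace H] [TopologicalSpace.SeparableSpace H]

/-- `A` defines a bounded operator on `ℓ²(H)` with norm at most `C`, expressed through
uniform bounds of the associated bilinear form on finitely supported sequences. -/
def SchurBoundedBy (A : ℕ → ℕ → (H →L[ℂ] H)) (C : ℝ) : Prop :=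
  ∀ (F G : Finset ℕ) (x y : ℕ → H),
    ‖∑ k ∈ G, ∑ j ∈ F, (inner ℂ (A k j (x j)) (y k) : ℂ)‖ ≤
      C * Real.sqrt (∑ j ∈ F, ‖x j‖ ^ 2) * Real.sqrt (∑ k ∈ G, ‖y k‖ ^ 2)

/-- `A ∈ B(ℓ²(H))`. -/
def MemB (A : ℕ → ℕ → (H →L[ℂ] H)) : Prop :=
  ∃ C, 0 ≤ C ∧ SchurBoundedBy A C

/-- The Schur product of two operator matrices: entrywise composition. -/
def schur (A B : ℕ → ℕ → (H →L[ℂ] H)) : ℕ → ℕ → (H →L[ℂ] H) :=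
  fun k j => (A k j).comp (B k j)

/-- `A` is a right Schur multiplier with multiplier norm at most `C`. -/
def MrBoundedBy (A : ℕ → ℕ → (H →L[ℂ] H)) (C : ℝ) : Prop :=
  ∀ (B : ℕ → ℕ → (H →L[ℂ] H)) (D : ℝ), 0 ≤ D → SchurBoundedBy B D →
    SchurBoundedBy (schur B A) (C * D)

/-- `A` is a left Schur multiplier with multiplier norm at most `C`. -/
def MlBoundedBy (A : ℕ → ℕ → (H →L[ℂ] H)) (C : ℝ) : Prop :=
  ∀ (B : ℕ → ℕ → (H →L[ℂ] H)) (D : ℝ), 0 ≤ D → SchurBoundedBy B D →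
    SchurBoundedBy (schur A B) (C * D)

/-- `A ∈ M_r(ℓ²(H))`. -/
def MemMr (A : ℕ → ℕ → (H →L[ℂ] H)) : Prop :=
  ∃ C, 0 ≤ C ∧ MrBoundedBy A C

/-- `A ∈ M_l(ℓ²(H))`. -/
def MemMl (A : ℕ → ℕ → (H →L[ℂ] H)) : Prop :=
  ∃ C, 0 ≤ C ∧ MlBoundedBy A C

/-- A matrix polynomial: supported on finitely many diagonals, with uniformly
bounded operator entries. -/
def IsMatPoly (A : ℕ → ℕ → (H →L[ℂ] H)) : Prop :=
  (∃ N : ℕ, ∀ k j : ℕ, N < ((j : ℤ) - (k : ℤ)).natAbs → A k j = 0) ∧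
    ∃ M : ℝ, ∀ k j : ℕ, ‖A k j‖ ≤ M

/-- `A ∈ L¹_r(ℓ²(H))`: `A` is a right Schur multiplier lying in the closure of the
matrix polynomials in the right multiplier norm. -/
def MemL1r (A : ℕ → ℕ → (H →L[ℂ] H)) : Prop :=
  MemMr A ∧ ∀ ε : ℝ, 0 < ε → ∃ P : ℕ → ℕ → (H →L[ℂ] H),
    IsMatPoly P ∧ MrBoundedBy (fun k j => A k j - P k j) ε

/-- `A ∈ L¹_l(ℓ²(H))`: `A` is a left Schur multiplier lying in the closure of the
matrix polynomials in the left multiplier norm. -/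
def MemL1l (A : ℕ → ℕ → (H →L[ℂ] H)) : Prop :=
  MemMl A ∧ ∀ ε : ℝ, 0 < ε → ∃ P : ℕ → ℕ → (H →L[ℂ] H),
    IsMatPoly P ∧ MlBoundedBy (fun k j => A k j - P k j) ε

/-- The Fejér mean `σ_n(A)`. -/
def fejerMean (n : ℕ) (A : ℕ → ℕ → (H →L[ℂ] H)) : ℕ → ℕ → (H →L[ℂ] H) :=
  fun k j => (max 0 (1 - ((((j : ℤ) - (k : ℤ)).natAbs : ℝ) / (n + 1)))) • A k j

open Finset Complex

noncomputable def ee (m : ℕ) (s : ℤ) : ℂ :=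
  Complex.exp ((2 * Real.pi * s / m : ℝ) * Complex.I)

lemma ee_norm (m : ℕ) (s : ℤ) : ‖ee m s‖ = 1 := by
  rw [ee]
  exact Complex.norm_exp_ofReal_mul_I _

lemma ee_mul (m : ℕ) (s s' : ℤ) : ee m s * ee m s' = ee m (s + s') := by
  rw [ee, ee, ee, ← Complex.exp_add]
  congr 1
  push_cast
  ring

lemma ee_conj (m : ℕ) (s : ℤ) : (starRingEnd ℂ) (ee m s) = ee m (-s) := by
  rw [ee, ee, ← Complex.exp_conj]
  congr 1
  rw [map_mul, Complex.conj_ofReal, Complex.conj_I]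
  push_cast
  ring

lemma ee_pow (m : ℕ) (s : ℤ) (t : ℕ) : ee m s ^ t = ee m (s * t) := by
  rw [ee, ee, ← Complex.exp_nat_mul]
  congr 1
  push_cast
  ring

lemma ee_eq_one (m : ℕ) (hm : 0 < m) {s : ℤ} (h : (m : ℤ) ∣ s) : ee m s = 1 := by
  obtain ⟨c, rfl⟩ := h
  rw [ee]
  have hm' : (m : ℝ) ≠ 0 := by positivity
  have : ((2 * Real.pi * ((m : ℤ) * c : ℤ) / m : ℝ) : ℂ) * Complex.I = c * (2 * Real.pi * Complex.I) := by
    have hm'' : (m : ℂ) ≠ 0 := by exact_mod_cast Nat.cast_ne_zero.mpr hm.ne'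
    push_cast
    field_simp
  rw [this, Complex.exp_int_mul_two_pi_mul_I]

lemma ee_sum (m : ℕ) (hm : 0 < m) (s : ℤ) :
    ∑ t ∈ range m, ee m (s * t) = if (m : ℤ) ∣ s then (m : ℂ) else 0 := by
  have h1 : ∀ t ∈ range m, ee m (s * t) = (ee m s) ^ t := fun t _ => (ee_pow m s t).symm
  rw [Finset.sum_congr rfl h1]
  by_cases hdvd : (m : ℤ) ∣ s
  · rw [if_pos hdvd, ee_eq_one m hm hdvd]
    simp
  · rw [if_neg hdvd]
    have hne : ee m s ≠ 1 := by
      intro h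
      rw [ee, Complex.exp_eq_one_iff] at h
      obtain ⟨k, hk⟩ := h
      have hI : (Complex.I : ℂ) ≠ 0 := Complex.I_ne_zero
      have hk' : ((2 * Real.pi * s / m : ℝ) : ℂ) = ((k * (2 * Real.pi) : ℝ) : ℂ) := by
        have : ((k * (2 * Real.pi) : ℝ) : ℂ) * Complex.I = ↑k * (2 * ↑Real.pi * Complex.I) := by
          push_cast; ring
        apply mul_right_cancel₀ hI
        rw [hk, this]
      have hreal : 2 * Real.pi * s / m = k * (2 * Real.pi) := by
        exact_mod_cast hk'
      have hpi : Real.pi ≠ 0 := Real.pi_ne_zero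
      have hm' : (m : ℝ) ≠ 0 := by positivity
      have hs : (s : ℝ) = k * m := by
        have h2 : (0:ℝ) < 2 * Real.pi := by positivity
        field_simp at hreal
        nlinarith [hreal, Real.pi_pos]
      have hs' : s = k * m := by exact_mod_cast hs
      exact hdvd ⟨k, by linarith [hs']⟩
    rw [geom_sum_eq hne]
    have hone : (ee m s) ^ m = 1 := by
      rw [ee_pow]
      exact ee_eq_one m hm ⟨s, by ring⟩
    rw [hone]
    simp

lemma count_diag (n : ℕ) (d : ℤ) :
    (((range (n+1)) ×ˢ (range (n+1))).filter fun p => (p.1 : ℤ) - p.2 = d).card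
      = (n + 1) - d.natAbs := by
  obtain ⟨c, rfl | rfl⟩ := d.eq_nat_or_neg
  · rw [show (n + 1) - (c : ℤ).natAbs = n + 1 - c by simp]
    rw [← Finset.card_range (n + 1 - c)]
    symm
    apply Finset.card_bij (fun b _ => ((b + c : ℕ), b))
    · intro b hb
      simp only [Finset.mem_filter, Finset.mem_product, Finset.mem_range] at *
      constructor
      · omega
      · push_cast; ring
    · intro b₁ h₁ b₂ h₂ h
      simpa using congrArg Prod.snd h
    · intro p hp
      simp only [Finset.mem_filter, Finset.mem_product, Finset.mem_range] at hp
      refine ⟨p.2, by simp only [Finset.mem_range]; omega, ?_⟩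
      have : p.1 = p.2 + c := by omega
      simp [← this]
  · rw [show (n + 1) - (-(c : ℤ)).natAbs = n + 1 - c by simp]
    rw [← Finset.card_range (n + 1 - c)]
    symm
    apply Finset.card_bij (fun b _ => (b, (b + c : ℕ)))
    · intro b hb
      simp only [Finset.mem_filter, Finset.mem_product, Finset.mem_range] at *
      constructor
      · omega
      · push_cast; ring
    · intro b₁ h₁ b₂ h₂ h
      simpa using congrArg Prod.fst h
    · intro p hp
      simp only [Finset.mem_filter, Finset.mem_product, Finset.mem_range] at hp
      refine ⟨p.1, by simp only [Finset.mem_range]; omega, ?_⟩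
      have : p.2 = p.1 + c := by omega
      simp [← this]

lemma fejer_coeff_eq (n : ℕ) (d : ℤ) :
    (max 0 (1 - (d.natAbs : ℝ) / (n + 1))) * (n + 1) = ((n + 1) - d.natAbs : ℕ) := by
  rcases le_total d.natAbs (n + 1) with h | h
  · have ht : (d.natAbs : ℝ) / (n + 1) ≤ 1 := by
      rw [div_le_one (by positivity)]
      exact_mod_cast h
    rw [max_eq_right (by linarith), Nat.cast_sub h, sub_mul, one_mul,
      div_mul_cancel₀ _ (by positivity : ((n : ℝ) + 1) ≠ 0)]
    push_cast
    ring
  · have ht : (1 : ℝ) ≤ (d.natAbs : ℝ) / (n + 1) := by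
      rw [le_div_iff₀ (by positivity)]
      push_cast
      linarith [(show ((n:ℝ) + 1) ≤ d.natAbs by exact_mod_cast h)]
    rw [Nat.sub_eq_zero_of_le h, max_eq_left (by linarith)]
    simp

lemma key_sum (n m : ℕ) (hm : 0 < m) (d : ℤ) (hd : d.natAbs + n < m) :
    ∑ t ∈ range m, ((∑ a ∈ range (n+1), ee m (a * t)) *
        (starRingEnd ℂ) (∑ b ∈ range (n+1), ee m (b * t))) * ee m (-d * t)
      = (m : ℂ) * (((n + 1) - d.natAbs : ℕ) : ℂ) := by
  have expand : ∀ t : ℕ, ((∑ a ∈ range (n+1), ee m (a * t)) *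
        (starRingEnd ℂ) (∑ b ∈ range (n+1), ee m (b * t))) * ee m (-d * t)
      = ∑ a ∈ range (n+1), ∑ b ∈ range (n+1), ee m (((a : ℤ) - b - d) * t) := by
    intro t
    rw [map_sum, Finset.sum_mul_sum, Finset.sum_mul]
    rw [Finset.sum_congr rfl]
    intro a _
    rw [Finset.sum_mul]
    rw [Finset.sum_congr rfl]
    intro b _
    rw [ee_conj, ee_mul, ee_mul]
    congr 1
    ring
  rw [Finset.sum_congr rfl fun t _ => expand t]
  rw [Finset.sum_comm]
  have swap2 : ∀ a ∈ range (n+1), ∑ t ∈ range m, ∑ b ∈ range (n+1), ee m (((a:ℤ) - b - d) * t)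
      = ∑ b ∈ range (n+1), ∑ t ∈ range m, ee m (((a:ℤ) - b - d) * t) :=
    fun a _ => Finset.sum_comm
  rw [Finset.sum_congr rfl swap2]
  have inner_eq : ∀ a ∈ range (n+1), ∀ b ∈ range (n+1),
      ∑ t ∈ range m, ee m (((a:ℤ) - b - d) * t)
        = if ((a:ℤ) - b = d) then (m : ℂ) else 0 := by
    intro a ha b hb
    rw [ee_sum m hm]
    simp only [Finset.mem_range] at ha hb
    congr 1
    have habs : ((a:ℤ) - b - d).natAbs < (m:ℤ).natAbs := by
      simp only [Int.natAbs_natCast]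
      omega
    rw [eq_iff_iff]
    constructor
    · intro hdvd
      have hz := Int.eq_zero_of_dvd_of_natAbs_lt_natAbs hdvd habs
      omega
    · intro h
      rw [show (a:ℤ) - b - d = 0 by omega]
      exact dvd_zero _
  rw [Finset.sum_congr rfl fun a ha => Finset.sum_congr rfl fun b hb => inner_eq a ha b hb]
  rw [← Finset.sum_product', ← Finset.sum_filter, Finset.sum_const, count_diag,
    nsmul_eq_mul, mul_comm]

-- ===================== auxiliary lemmas =====================

lemma schurBoundedBy_mono {X : ℕ → ℕ → (H →L[ℂ] H)} {C C' : ℝ}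
    (h : C ≤ C') (hX : SchurBoundedBy X C) : SchurBoundedBy X C' := by
  intro F G x y
  refine (hX F G x y).trans ?_
  have h1 : (0:ℝ) ≤ Real.sqrt (∑ j ∈ F, ‖x j‖ ^ 2) := Real.sqrt_nonneg _
  have h2 : (0:ℝ) ≤ Real.sqrt (∑ k ∈ G, ‖y k‖ ^ 2) := Real.sqrt_nonneg _
  have := mul_le_mul_of_nonneg_right (mul_le_mul_of_nonneg_right h h1) h2
  linarith

lemma schurBoundedBy_add {X Y : ℕ → ℕ → (H →L[ℂ] H)} {C₁ C₂ : ℝ}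
    (hX : SchurBoundedBy X C₁) (hY : SchurBoundedBy Y C₂) :
    SchurBoundedBy (fun k j => X k j + Y k j) (C₁ + C₂) := by
  intro F G x y
  have hsplit : ∑ k ∈ G, ∑ j ∈ F, (inner ℂ ((X k j + Y k j) (x j)) (y k) : ℂ)
      = (∑ k ∈ G, ∑ j ∈ F, (inner ℂ (X k j (x j)) (y k) : ℂ))
        + ∑ k ∈ G, ∑ j ∈ F, (inner ℂ (Y k j (x j)) (y k) : ℂ) := by
    rw [← Finset.sum_add_distrib]
    refine Finset.sum_congr rfl fun k _ => ?_
    rw [← Finset.sum_add_distrib]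
    refine Finset.sum_congr rfl fun j _ => ?_
    rw [ContinuousLinearMap.add_apply, inner_add_left]
  rw [hsplit]
  refine (norm_add_le _ _).trans ?_
  have hx := hX F G x y
  have hy := hY F G x y
  rw [add_mul, add_mul]
  linarith

lemma schurBoundedBy_neg {X : ℕ → ℕ → (H →L[ℂ] H)} {C : ℝ}
    (hX : SchurBoundedBy X C) : SchurBoundedBy (fun k j => - X k j) C := by
  intro F G x y
  have hsplit : ∑ k ∈ G, ∑ j ∈ F, (inner ℂ ((- X k j) (x j)) (y k) : ℂ)
      = - ∑ k ∈ G, ∑ j ∈ F, (inner ℂ (X k j (x j)) (y k) : ℂ) := by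
    rw [← Finset.sum_neg_distrib]
    refine Finset.sum_congr rfl fun k _ => ?_
    rw [← Finset.sum_neg_distrib]
    refine Finset.sum_congr rfl fun j _ => ?_
    rw [ContinuousLinearMap.neg_apply, inner_neg_left]
  rw [hsplit, norm_neg]
  exact hX F G x y

lemma schurBoundedBy_sub {X Y : ℕ → ℕ → (H →L[ℂ] H)} {C₁ C₂ : ℝ}
    (hX : SchurBoundedBy X C₁) (hY : SchurBoundedBy Y C₂) :
    SchurBoundedBy (fun k j => X k j - Y k j) (C₁ + C₂) := by
  have := schurBoundedBy_add hX (schurBoundedBy_neg hY)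
  simpa [sub_eq_add_neg] using this

/-- Entry bound from a Schur bound. -/
lemma entry_norm_le {B : ℕ → ℕ → (H →L[ℂ] H)} {C : ℝ} (hC : 0 ≤ C)
    (hB : SchurBoundedBy B C) (k j : ℕ) : ‖B k j‖ ≤ C := by
  refine ContinuousLinearMap.opNorm_le_bound _ hC fun v => ?_
  have h := hB {j} {k} (fun _ => v) (fun _ => B k j v)
  simp only [Finset.sum_singleton] at h
  rw [inner_self_eq_norm_sq_to_K (𝕜 := ℂ)] at h
  rw [Real.sqrt_sq (norm_nonneg _), Real.sqrt_sq (norm_nonneg _)] at h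
  have h' : ‖B k j v‖ ^ 2 ≤ C * ‖v‖ * ‖B k j v‖ := by
    calc ‖B k j v‖ ^ 2 = ‖((‖B k j v‖ : ℝ) ^ 2 : ℂ)‖ := by
          push_cast
          rw [norm_pow, Complex.norm_real, norm_norm]
      _ ≤ C * ‖v‖ * ‖B k j v‖ := h
  rcases eq_or_lt_of_le (norm_nonneg (B k j v)) with h0 | h0
  · rw [← h0]; positivity
  · nlinarith [h']


lemma banded_schurBoundedBy {X : ℕ → ℕ → (H →L[ℂ] H)} {N : ℕ} {δ : ℝ} (hδ : 0 ≤ δ)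
    (hsupp : ∀ k j : ℕ, N < ((j : ℤ) - k).natAbs → X k j = 0)
    (hnorm : ∀ k j : ℕ, ‖X k j‖ ≤ δ) :
    SchurBoundedBy X ((2 * N + 1) * δ) := by
  intro F G x y
  set R₁ := Real.sqrt (∑ j ∈ F, ‖x j‖ ^ 2) with hR₁
  set R₂ := Real.sqrt (∑ k ∈ G, ‖y k‖ ^ 2) with hR₂
  have hR₁0 : 0 ≤ R₁ := Real.sqrt_nonneg _
  have hR₂0 : 0 ≤ R₂ := Real.sqrt_nonneg _
  have hx0 : 0 ≤ ∑ j ∈ F, ‖x j‖ ^ 2 := Finset.sum_nonneg fun _ _ => sq_nonneg _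
  have hy0 : 0 ≤ ∑ k ∈ G, ‖y k‖ ^ 2 := Finset.sum_nonneg fun _ _ => sq_nonneg _
  set S := (G ×ˢ F).filter (fun p : ℕ × ℕ => ((p.2 : ℤ) - p.1).natAbs ≤ N) with hS
  have step1 : ‖∑ k ∈ G, ∑ j ∈ F, (inner ℂ (X k j (x j)) (y k) : ℂ)‖
      ≤ ∑ p ∈ S, δ * (‖x p.2‖ * ‖y p.1‖) := by
    rw [← Finset.sum_product']
    refine (norm_sum_le _ _).trans ?_
    rw [hS, Finset.sum_filter]
    refine Finset.sum_le_sum fun p _ => ?_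
    by_cases h : ((p.2 : ℤ) - p.1).natAbs ≤ N
    · rw [if_pos h]
      calc ‖(inner ℂ (X p.1 p.2 (x p.2)) (y p.1) : ℂ)‖
          ≤ ‖X p.1 p.2 (x p.2)‖ * ‖y p.1‖ := norm_inner_le_norm _ _
        _ ≤ (‖X p.1 p.2‖ * ‖x p.2‖) * ‖y p.1‖ := by
            exact mul_le_mul_of_nonneg_right ((X p.1 p.2).le_opNorm _) (norm_nonneg _)
        _ ≤ δ * (‖x p.2‖ * ‖y p.1‖) := by
            rw [mul_assoc]
            exact mul_le_mul_of_nonneg_right (hnorm _ _)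
              (mul_nonneg (norm_nonneg _) (norm_nonneg _))
    · rw [if_neg h, hsupp p.1 p.2 (by omega)]
      simp
  have hmaps : ∀ p ∈ S, ((p.2 : ℤ) - p.1) ∈ Finset.Icc (-(N : ℤ)) N := by
    intro p hp
    rw [hS, Finset.mem_filter] at hp
    rw [Finset.mem_Icc]
    omega
  have step2 : ∑ p ∈ S, δ * (‖x p.2‖ * ‖y p.1‖)
      = ∑ d ∈ Finset.Icc (-(N : ℤ)) N,
          ∑ p ∈ S.filter (fun p => (p.2 : ℤ) - p.1 = d), δ * (‖x p.2‖ * ‖y p.1‖) :=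
    (Finset.sum_fiberwise_of_maps_to hmaps _).symm
  have step3 : ∀ d : ℤ, ∑ p ∈ S.filter (fun p => (p.2 : ℤ) - p.1 = d),
      δ * (‖x p.2‖ * ‖y p.1‖) ≤ δ * (R₁ * R₂) := by
    intro d
    set T := S.filter (fun p => (p.2 : ℤ) - p.1 = d) with hT
    rw [← Finset.mul_sum]
    refine mul_le_mul_of_nonneg_left ?_ hδ
    have hxT : ∑ p ∈ T, ‖x p.2‖ ^ 2 ≤ ∑ j ∈ F, ‖x j‖ ^ 2 := by
      have hinj : ∀ p ∈ T, ∀ q ∈ T, p.2 = q.2 → p = q := by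
        intro p hp q hq h
        rw [hT, Finset.mem_filter] at hp hq
        have := hp.2; have := hq.2
        refine Prod.ext ?_ h
        omega
      rw [← Finset.sum_image (f := fun j => ‖x j‖ ^ 2) hinj]
      refine Finset.sum_le_sum_of_subset_of_nonneg ?_ (fun _ _ _ => sq_nonneg _)
      intro j hj
      rw [Finset.mem_image] at hj
      obtain ⟨p, hp, rfl⟩ := hj
      rw [hT, Finset.mem_filter, hS, Finset.mem_filter, Finset.mem_product] at hp
      exact hp.1.1.2
    have hyT : ∑ p ∈ T, ‖y p.1‖ ^ 2 ≤ ∑ k ∈ G, ‖y k‖ ^ 2 := by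
      have hinj : ∀ p ∈ T, ∀ q ∈ T, p.1 = q.1 → p = q := by
        intro p hp q hq h
        rw [hT, Finset.mem_filter] at hp hq
        have := hp.2; have := hq.2
        refine Prod.ext h ?_
        omega
      rw [← Finset.sum_image (f := fun k => ‖y k‖ ^ 2) hinj]
      refine Finset.sum_le_sum_of_subset_of_nonneg ?_ (fun _ _ _ => sq_nonneg _)
      intro k hk
      rw [Finset.mem_image] at hk
      obtain ⟨p, hp, rfl⟩ := hk
      rw [hT, Finset.mem_filter, hS, Finset.mem_filter, Finset.mem_product] at hp
      exact hp.1.1.1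
    have hcs := Finset.sum_mul_sq_le_sq_mul_sq T (fun p => ‖x p.2‖) (fun p => ‖y p.1‖)
    have h2 : (∑ p ∈ T, ‖x p.2‖ * ‖y p.1‖) ^ 2 ≤ (R₁ * R₂) ^ 2 := by
      rw [mul_pow, hR₁, hR₂, Real.sq_sqrt hx0, Real.sq_sqrt hy0]
      refine hcs.trans ?_
      exact mul_le_mul hxT hyT (Finset.sum_nonneg fun _ _ => sq_nonneg _) hx0
    have hs0 : 0 ≤ ∑ p ∈ T, ‖x p.2‖ * ‖y p.1‖ :=
      Finset.sum_nonneg fun _ _ => mul_nonneg (norm_nonneg _) (norm_nonneg _)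
    have := Real.sqrt_le_sqrt h2
    rwa [Real.sqrt_sq hs0, Real.sqrt_sq (mul_nonneg hR₁0 hR₂0)] at this
  have hcard : (Finset.Icc (-(N : ℤ)) N).card = 2 * N + 1 := by
    rw [Int.card_Icc]
    omega
  calc ‖∑ k ∈ G, ∑ j ∈ F, (inner ℂ (X k j (x j)) (y k) : ℂ)‖
      ≤ ∑ p ∈ S, δ * (‖x p.2‖ * ‖y p.1‖) := step1
    _ = ∑ d ∈ Finset.Icc (-(N : ℤ)) N,
          ∑ p ∈ S.filter (fun p => (p.2 : ℤ) - p.1 = d), δ * (‖x p.2‖ * ‖y p.1‖) := step2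
    _ ≤ ∑ _d ∈ Finset.Icc (-(N : ℤ)) N, δ * (R₁ * R₂) :=
        Finset.sum_le_sum fun d _ => step3 d
    _ = (2 * N + 1) * δ * R₁ * R₂ := by
        rw [Finset.sum_const, hcard, nsmul_eq_mul]
        push_cast
        ring


lemma ee_zero (m : ℕ) : ee m 0 = 1 := by
  simp [ee]

/-- The Fejér means are complete Schur contractions. -/
lemma fejer_schurBoundedBy {B : ℕ → ℕ → (H →L[ℂ] H)} {D : ℝ}
    (hB : SchurBoundedBy B D) (n : ℕ) : SchurBoundedBy (fejerMean n B) D := by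
  intro F G x y
  set m : ℕ := n + F.sup id + G.sup id + 1 with hm
  have hm0 : 0 < m := by omega
  have hrange : ∀ j ∈ F, ∀ k ∈ G, ((j : ℤ) - k).natAbs + n < m := by
    intro j hj k hk
    have hj' : j ≤ F.sup id := Finset.le_sup (f := id) hj
    have hk' : k ≤ G.sup id := Finset.le_sup (f := id) hk
    have h1 : ((j : ℤ) - k).natAbs ≤ j + k := by
      have := Int.natAbs_sub_le (j : ℤ) (k : ℤ)
      simpa using this
    omega
  set P : ℕ → ℂ := fun t => ∑ a ∈ range (n+1), ee m (a * t) with hP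
  set xt : ℕ → ℕ → H := fun t j => ee m (j * t) • x j with hxt
  set yt : ℕ → ℕ → H := fun t k => ee m (k * t) • y k with hyt
  set S := ∑ k ∈ G, ∑ j ∈ F, (inner ℂ (fejerMean n B k j (x j)) (y k) : ℂ) with hSdef
  set R₁ := Real.sqrt (∑ j ∈ F, ‖x j‖ ^ 2) with hR₁
  set R₂ := Real.sqrt (∑ k ∈ G, ‖y k‖ ^ 2) with hR₂
  have hR₁0 : 0 ≤ R₁ := Real.sqrt_nonneg _
  have hR₂0 : 0 ≤ R₂ := Real.sqrt_nonneg _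
  -- Step A : the key algebraic identity
  have stepA : ∑ t ∈ range m, (P t * (starRingEnd ℂ) (P t)) *
        (∑ k ∈ G, ∑ j ∈ F, (inner ℂ (B k j (xt t j)) (yt t k) : ℂ))
      = (((m * (n+1) : ℕ)) : ℂ) * S := by
    have lhs_eq : ∀ t ∈ range m, (P t * (starRingEnd ℂ) (P t)) *
          (∑ k ∈ G, ∑ j ∈ F, (inner ℂ (B k j (xt t j)) (yt t k) : ℂ))
        = ∑ k ∈ G, ∑ j ∈ F,
            ((P t * (starRingEnd ℂ) (P t)) * ee m (-((j : ℤ) - k) * t)) *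
              (inner ℂ (B k j (x j)) (y k) : ℂ) := by
      intro t _
      rw [Finset.mul_sum]
      refine Finset.sum_congr rfl fun k _ => ?_
      rw [Finset.mul_sum]
      refine Finset.sum_congr rfl fun j _ => ?_
      simp only [hxt, hyt]
      rw [ContinuousLinearMap.map_smul, inner_smul_left, inner_smul_right, ee_conj]
      have hee : ee m (-((j : ℤ) * t)) * ee m ((k : ℤ) * t) = ee m (-((j : ℤ) - k) * t) := by
        rw [ee_mul]
        congr 1
        ring
      rw [← hee]
      ring
    rw [Finset.sum_congr rfl lhs_eq, Finset.sum_comm]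
    have swap2 : ∀ k ∈ G, ∑ t ∈ range m, ∑ j ∈ F,
          ((P t * (starRingEnd ℂ) (P t)) * ee m (-((j : ℤ) - k) * t)) *
            (inner ℂ (B k j (x j)) (y k) : ℂ)
        = ∑ j ∈ F, ∑ t ∈ range m,
          ((P t * (starRingEnd ℂ) (P t)) * ee m (-((j : ℤ) - k) * t)) *
            (inner ℂ (B k j (x j)) (y k) : ℂ) := fun k _ => Finset.sum_comm
    rw [Finset.sum_congr rfl swap2, hSdef, Finset.mul_sum]
    refine Finset.sum_congr rfl fun k hk => ?_
    rw [Finset.mul_sum]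
    refine Finset.sum_congr rfl fun j hj => ?_
    rw [← Finset.sum_mul, key_sum n m hm0 ((j : ℤ) - k) (hrange j hj k hk)]
    -- now handle the Fejér coefficient
    have hentry : (inner ℂ (fejerMean n B k j (x j)) (y k) : ℂ)
        = (((max 0 (1 - ((((j : ℤ) - k).natAbs : ℝ) / (n + 1))) : ℝ)) : ℂ) *
            (inner ℂ (B k j (x j)) (y k) : ℂ) := by
      rw [fejerMean, ContinuousLinearMap.smul_apply, ← Complex.coe_smul,
        inner_smul_left, Complex.conj_ofReal]
    rw [hentry]
    have hr := fejer_coeff_eq n ((j : ℤ) - k)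
    have hcast : (((m * (n+1) : ℕ)) : ℂ) *
          (((max 0 (1 - ((((j : ℤ) - k).natAbs : ℝ) / (n + 1))) : ℝ)) : ℂ)
        = (m : ℂ) * ((((n + 1) - ((j : ℤ) - k).natAbs : ℕ)) : ℂ) := by
      calc (((m * (n+1) : ℕ)) : ℂ) *
            (((max 0 (1 - ((((j : ℤ) - k).natAbs : ℝ) / (n + 1))) : ℝ)) : ℂ)
          = (m : ℂ) * ((((max 0 (1 - ((((j : ℤ) - k).natAbs : ℝ) / (n + 1)))) *
              ((n : ℝ) + 1) : ℝ)) : ℂ) := by push_cast; ring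
        _ = (m : ℂ) * ((((n + 1) - ((j : ℤ) - k).natAbs : ℕ)) : ℂ) := by rw [hr]; norm_cast
    rw [← mul_assoc, hcast]
  -- Step B : uniform bound on the rotated forms
  have stepB : ∀ t : ℕ, ‖∑ k ∈ G, ∑ j ∈ F, (inner ℂ (B k j (xt t j)) (yt t k) : ℂ)‖
      ≤ D * R₁ * R₂ := by
    intro t
    have h := hB F G (xt t) (yt t)
    have hx : ∑ j ∈ F, ‖xt t j‖ ^ 2 = ∑ j ∈ F, ‖x j‖ ^ 2 := by
      refine Finset.sum_congr rfl fun j _ => ?_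
      rw [hxt]
      simp only [norm_smul, ee_norm, one_mul]
    have hy : ∑ k ∈ G, ‖yt t k‖ ^ 2 = ∑ k ∈ G, ‖y k‖ ^ 2 := by
      refine Finset.sum_congr rfl fun k _ => ?_
      rw [hyt]
      simp only [norm_smul, ee_norm, one_mul]
    rwa [hx, hy] at h
  -- Step C : total weight of the Fejér kernel
  have stepC : ∑ t ∈ range m, ‖P t‖ ^ 2 = (m : ℝ) * (n + 1) := by
    have h0 := key_sum n m hm0 0 (by omega)
    simp only [neg_zero, zero_mul, ee_zero, mul_one, Int.natAbs_zero, Nat.sub_zero] at h0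
    have hPt : ∀ t : ℕ, P t * (starRingEnd ℂ) (P t) = ((‖P t‖ ^ 2 : ℝ) : ℂ) := by
      intro t
      rw [Complex.mul_conj, Complex.normSq_eq_norm_sq]
    rw [Finset.sum_congr rfl fun t _ => hPt t] at h0
    have h1 : ((∑ t ∈ range m, ‖P t‖ ^ 2 : ℝ) : ℂ) = (((m : ℝ) * (n + 1) : ℝ) : ℂ) := by
      push_cast at h0 ⊢
      exact h0
    exact_mod_cast h1
  -- Step D : conclude
  have hpos : (0 : ℝ) < (m * (n + 1) : ℕ) := by positivity
  have hfinal : ((m * (n + 1) : ℕ) : ℝ) * ‖S‖ ≤ ((m * (n + 1) : ℕ) : ℝ) * (D * R₁ * R₂) := by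
    have h1 : ((m * (n + 1) : ℕ) : ℝ) * ‖S‖ = ‖(((m * (n+1) : ℕ)) : ℂ) * S‖ := by
      rw [norm_mul, Complex.norm_natCast]
    rw [h1, ← stepA]
    refine (norm_sum_le _ _).trans ?_
    have hterm : ∀ t ∈ range m, ‖(P t * (starRingEnd ℂ) (P t)) *
          (∑ k ∈ G, ∑ j ∈ F, (inner ℂ (B k j (xt t j)) (yt t k) : ℂ))‖
        ≤ ‖P t‖ ^ 2 * (D * R₁ * R₂) := by
      intro t _
      rw [norm_mul, norm_mul, RCLike.norm_conj]
      rw [← sq]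
      exact mul_le_mul_of_nonneg_left (stepB t) (sq_nonneg _)
    refine (Finset.sum_le_sum hterm).trans ?_
    rw [← Finset.sum_mul, stepC]
    apply le_of_eq
    push_cast
    ring
  have := (mul_le_mul_iff_right₀ hpos).mp hfinal
  rw [hR₁, hR₂] at this
  exact this

/-- If `A ∈ L¹_r(ℓ²(H))` and `B ∈ B(ℓ²(H))` then `B*A ∈ C(ℓ²(H))`, i.e. the Fejér means
of `B*A` converge to `B*A` in the operator norm of `B(ℓ²(H))`. -/
theorem schur_memL1r_memC (A B : ℕ → ℕ → (H →L[ℂ] H))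
    (hA : MemL1r A) (hB : MemB B) :
    ∀ ε : ℝ, 0 < ε → ∃ N : ℕ, ∀ n : ℕ, N ≤ n →
      SchurBoundedBy (fun k j => fejerMean n (schur B A) k j - schur B A k j) ε := by
  intro ε hε
  obtain ⟨Cb, hCb0, hCbB⟩ := hB
  have hCb1 : (0 : ℝ) < Cb + 1 := by linarith
  set ε₁ := ε / (4 * (Cb + 1)) with hε₁def
  have hε₁ : 0 < ε₁ := by positivity
  obtain ⟨P, ⟨⟨N, hN⟩, ⟨M, hM⟩⟩, hP⟩ := hA.2 ε₁ hε₁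
  have hM0 : 0 ≤ M := le_trans (norm_nonneg _) (hM 0 0)
  have hQ : SchurBoundedBy (schur B (fun k j => A k j - P k j)) (ε₁ * Cb) :=
    hP B Cb hCb0 hCbB
  set K := ((2 * N + 1 : ℝ)) * ((N : ℝ) * (Cb * M)) with hK
  have hK0 : 0 ≤ K := by positivity
  obtain ⟨N₀, hN₀⟩ := exists_nat_ge (2 * K / ε)
  refine ⟨N₀, fun n hn => ?_⟩
  set δ := (N : ℝ) / (n + 1) * (Cb * M) with hδ
  have hδ0 : 0 ≤ δ := by positivity
  have hX2supp : ∀ k j : ℕ, N < ((j : ℤ) - k).natAbs →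
      fejerMean n (schur B P) k j - schur B P k j = 0 := by
    intro k j h
    have hp0 : P k j = 0 := hN k j h
    simp [fejerMean, schur, hp0]
  have hRnorm : ∀ k j : ℕ, ‖schur B P k j‖ ≤ Cb * M := by
    intro k j
    refine (ContinuousLinearMap.opNorm_comp_le _ _).trans ?_
    exact mul_le_mul (entry_norm_le hCb0 hCbB k j) (hM k j) (norm_nonneg _) hCb0
  have hX2norm : ∀ k j : ℕ, ‖fejerMean n (schur B P) k j - schur B P k j‖ ≤ δ := by
    intro k j
    by_cases h : ((j : ℤ) - k).natAbs ≤ N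
    · have heq : fejerMean n (schur B P) k j - schur B P k j
          = ((max 0 (1 - ((((j : ℤ) - k).natAbs : ℝ)) / (n + 1))) - 1) • schur B P k j := by
        rw [sub_smul, one_smul]
        rfl
      rw [heq, norm_smul, Real.norm_eq_abs]
      have ht0 : (0 : ℝ) ≤ ((((j : ℤ) - k).natAbs : ℝ)) / (n + 1) := by positivity
      have hts : ((((j : ℤ) - k).natAbs : ℝ)) / (n + 1) ≤ (N : ℝ) / (n + 1) := by
        have hnum : ((((j : ℤ) - k).natAbs : ℝ)) ≤ (N : ℝ) := by exact_mod_cast h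
        gcongr
      have habs : |(max 0 (1 - ((((j : ℤ) - k).natAbs : ℝ)) / (n + 1))) - 1| ≤ (N : ℝ) / (n + 1) := by
        set t := ((((j : ℤ) - k).natAbs : ℝ)) / (n + 1) with htdef
        rcases le_total (1 : ℝ) t with h1 | h1
        · rw [max_eq_left (by linarith), zero_sub, abs_neg, abs_one]
          linarith
        · rw [max_eq_right (by linarith), show (1 - t) - 1 = -t by ring, abs_neg,
            _root_.abs_of_nonneg ht0]
          linarith
      calc |(max 0 (1 - ((((j : ℤ) - k).natAbs : ℝ)) / (n + 1))) - 1| * ‖schur B P k j‖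
          ≤ ((N : ℝ) / (n + 1)) * (Cb * M) :=
            mul_le_mul habs (hRnorm k j) (norm_nonneg _) (by positivity)
        _ = δ := rfl
    · rw [hX2supp k j (by omega), norm_zero]
      exact hδ0
  have hX2 : SchurBoundedBy
      (fun k j => fejerMean n (schur B P) k j - schur B P k j) ((2 * N + 1) * δ) :=
    banded_schurBoundedBy hδ0 hX2supp hX2norm
  have hX1 : SchurBoundedBy
      (fun k j => fejerMean n (schur B (fun k j => A k j - P k j)) k j
        - schur B (fun k j => A k j - P k j) k j) (ε₁ * Cb + ε₁ * Cb) :=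
    schurBoundedBy_sub (fejer_schurBoundedBy hQ n) hQ
  have hsum := schurBoundedBy_add hX1 hX2
  have hEq : (fun k j => fejerMean n (schur B A) k j - schur B A k j)
      = (fun k j => (fejerMean n (schur B (fun k j => A k j - P k j)) k j
          - schur B (fun k j => A k j - P k j) k j)
        + (fejerMean n (schur B P) k j - schur B P k j)) := by
    funext k j
    simp only [fejerMean, schur]
    set_option synthInstance.maxHeartbeats 1000000 in
    rw [ContinuousLinearMap.comp_sub, smul_sub]
    abel
  rw [hEq]
  refine schurBoundedBy_mono ?_ hsum
  have hb1 : ε₁ * Cb + ε₁ * Cb ≤ ε / 2 := by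
    have h1 : ε₁ * Cb ≤ ε₁ * (Cb + 1) := by nlinarith
    have h2 : ε₁ * (Cb + 1) = ε / 4 := by
      rw [hε₁def]
      field_simp
    linarith
  have hb2 : (2 * (N : ℝ) + 1) * δ ≤ ε / 2 := by
    have hKn : (2 * (N : ℝ) + 1) * δ = K / (n + 1) := by
      rw [hδ, hK]
      field_simp
    rw [hKn, div_le_iff₀ (by positivity)]
    have h1 : 2 * K / ε ≤ (N₀ : ℝ) := hN₀
    have h2 : (N₀ : ℝ) ≤ (n : ℝ) := by exact_mod_cast hn
    rw [div_le_iff₀ hε] at h1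
    nlinarith
  linarith
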